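/- Let f be analytic on the disc with a zero of multiplicity m at a point z₀ ∈ 𝔻, and suppose the Liouville operator A_f is densely defined on H². Then the m functions g_{z₀}^{[0]}, ..., g_{z₀}^{[m−1]} are linearly independent eigenfunctions of A_f* with eigenvalue 0; hence the zero eigenspace of A_f* has dimension at least m. -/

import Mathlib

open Metric ComplexConjugate

noncomputable abbrev H2 : Type := lp (fun _ : ℕ => ℂ) 2

noncomputable def hardyEval (h : H2) (z : ℂ) : ℂ := ∑' n : ℕ, h n * z ^ n

/-- Taylor coefficients of the derivative-evaluation kernel `g_w^{[j]}`. -/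
noncomputable def gcoef (w : ℂ) (j : ℕ) : ℕ → ℂ := fun n =>
  if j ≤ n then ((n.factorial / (n - j).factorial : ℕ) : ℂ) * (conj w) ^ (n - j) else 0

/-- Polynomially bounded coefficient sequences. -/
def PolyBdd (c : ℕ → ℂ) : Prop := ∃ C : ℝ, ∃ k : ℕ, ∀ n : ℕ, ‖c n‖ ≤ C * ((n : ℝ) + 1) ^ k

lemma aux_summable (k : ℕ) {r : ℝ} (h0 : 0 ≤ r) (h1 : r < 1) :
    Summable (fun n : ℕ => ((n : ℝ) + 1) ^ k * r ^ n) := by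
  rcases eq_or_lt_of_le h0 with rfl | hr
  · apply summable_of_ne_finset_zero (s := {0})
    intro n hn
    simp only [Finset.mem_singleton] at hn
    simp [zero_pow hn]
  · have h := summable_pow_mul_geometric_of_norm_lt_one (R := ℝ) k
      (r := r) (by rwa [Real.norm_eq_abs, abs_of_nonneg h0])
    have h2 := (summable_nat_add_iff 1).mpr h
    have h3 := h2.mul_left r⁻¹
    apply h3.congr
    intro n
    have hrne : r ≠ 0 := ne_of_gt hr
    push_cast
    field_simp
    ring

lemma polyBdd_shift {c : ℕ → ℂ} (hc : PolyBdd c) :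
    PolyBdd (fun n => ((n : ℂ) + 1) * c (n + 1)) := by
  obtain ⟨C, k, hC⟩ := hc
  have hC0 : 0 ≤ C := le_trans (norm_nonneg (c 0)) (by simpa using hC 0)
  refine ⟨C * 2 ^ k, k + 1, fun n => ?_⟩
  have h1 : ‖((n : ℂ) + 1) * c (n + 1)‖ = ((n : ℝ) + 1) * ‖c (n + 1)‖ := by
    rw [norm_mul]
    congr 1
    have : ((n : ℂ) + 1) = ((n + 1 : ℕ) : ℂ) := by push_cast; ring
    rw [this, Complex.norm_natCast]
    push_cast; ring
  rw [h1]
  have h2 : ‖c (n + 1)‖ ≤ C * ((n : ℝ) + 2) ^ k := by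
    have h := hC (n + 1); push_cast at h
    have : ((n:ℝ) + 1 + 1) = (n:ℝ) + 2 := by ring
    rwa [this] at h
  have h3 : ((n : ℝ) + 2) ^ k ≤ (2 * ((n : ℝ) + 1)) ^ k := by
    apply pow_le_pow_left₀ (by positivity)
    have : (0:ℝ) ≤ n := Nat.cast_nonneg n
    linarith
  have hn1 : (0:ℝ) ≤ (n : ℝ) + 1 := by positivity
  calc ((n : ℝ) + 1) * ‖c (n + 1)‖ ≤ ((n : ℝ) + 1) * (C * (2 * ((n : ℝ) + 1)) ^ k) := by
        apply mul_le_mul_of_nonneg_left _ hn1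
        exact h2.trans (by apply mul_le_mul_of_nonneg_left h3 hC0)
    _ = C * 2 ^ k * ((n : ℝ) + 1) ^ (k + 1) := by rw [mul_pow]; ring

lemma hasDerivAt_tsum_pow {c : ℕ → ℂ} (hc : PolyBdd c) {z : ℂ} (hz : ‖z‖ < 1) :
    HasDerivAt (fun w : ℂ => ∑' n : ℕ, c n * w ^ n)
      (∑' n : ℕ, c (n + 1) * ((n : ℂ) + 1) * z ^ n) z := by
  obtain ⟨C, k, hC⟩ := hc
  have hC0 : 0 ≤ C := le_trans (norm_nonneg (c 0)) (by simpa using hC 0)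
  set ρ : ℝ := (‖z‖ + 1) / 2 with hρdef
  have hρ0 : 0 < ρ := by positivity
  have hzρ : ‖z‖ < ρ := by rw [hρdef]; linarith
  have hρ1 : ρ < 1 := by rw [hρdef]; linarith
  set u : ℕ → ℝ := fun n => (C / ρ) * (((n : ℝ) + 1) ^ (k + 1) * ρ ^ n) with hu
  have hus : Summable u := (aux_summable (k + 1) hρ0.le hρ1).mul_left _
  have hbound : ∀ (n : ℕ), ∀ y : ℂ, y ∈ ball (0 : ℂ) ρ →
      ‖c n * ((n : ℂ) * y ^ (n - 1))‖ ≤ u n := by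
    intro n y hy
    have hyρ : ‖y‖ ≤ ρ := le_of_lt (mem_ball_zero_iff.mp hy)
    have hy0 : (0 : ℝ) ≤ ‖y‖ := norm_nonneg y
    rw [norm_mul, norm_mul, Complex.norm_natCast, norm_pow]
    cases n with
    | zero => simp [hu]; positivity
    | succ n =>
      have h1 : ‖y‖ ^ (n + 1 - 1) ≤ ρ ^ n := by
        simpa using pow_le_pow_left₀ hy0 hyρ n
      have h2 : ‖c (n + 1)‖ ≤ C * ((n : ℝ) + 2) ^ k := by
        have h := hC (n + 1); push_cast at h
        have e : ((n : ℝ) + 1 + 1) = (n : ℝ) + 2 := by ring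
        rwa [e] at h
      have hun : u (n + 1) = C * ((n : ℝ) + 2) ^ (k + 1) * ρ ^ n := by
        rw [hu]
        have : ρ ≠ 0 := ne_of_gt hρ0
        push_cast
        field_simp
        ring
      rw [hun]
      have hc1 : ((n + 1 : ℕ) : ℝ) * ‖y‖ ^ (n + 1 - 1) ≤ ((n : ℝ) + 2) * ρ ^ n := by
        push_cast
        have := pow_nonneg hy0 n
        have hρn : (0:ℝ) ≤ ρ ^ n := pow_nonneg hρ0.le n
        have h1' : ‖y‖ ^ n ≤ ρ ^ n := by simpa using h1
        nlinarith [Nat.cast_nonneg (α := ℝ) n]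
      calc ‖c (n + 1)‖ * (((n + 1 : ℕ) : ℝ) * ‖y‖ ^ (n + 1 - 1))
          ≤ (C * ((n : ℝ) + 2) ^ k) * (((n : ℝ) + 2) * ρ ^ n) := by
            apply mul_le_mul h2 hc1 (by positivity) (by positivity)
        _ = C * ((n : ℝ) + 2) ^ (k + 1) * ρ ^ n := by ring
  have hg0 : Summable fun n : ℕ => c n * (0 : ℂ) ^ n := by
    apply summable_of_ne_finset_zero (s := {0})
    intro n hn
    simp only [Finset.mem_singleton] at hn
    simp [zero_pow hn]
  have hmain := hasDerivAt_tsum_of_isPreconnected hus isOpen_ball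
      (convex_ball (0 : ℂ) ρ).isPreconnected
      (g := fun n w => c n * w ^ n) (g' := fun n y => c n * ((n : ℂ) * y ^ (n - 1)))
      (fun n y _ => (hasDerivAt_pow n y).const_mul (c n))
      hbound (mem_ball_self hρ0) hg0 (mem_ball_zero_iff.mpr hzρ)
  have hs : Summable (fun n : ℕ => c n * ((n : ℂ) * z ^ (n - 1))) :=
    Summable.of_norm_bounded hus (fun n => hbound n z (mem_ball_zero_iff.mpr hzρ))
  have heq : ∑' n : ℕ, c n * ((n : ℂ) * z ^ (n - 1))
      = ∑' n : ℕ, c (n + 1) * ((n : ℂ) + 1) * z ^ n := by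
    rw [Summable.tsum_eq_zero_add hs]
    simp only [Nat.cast_zero, zero_mul, mul_zero, zero_add]
    apply tsum_congr
    intro n
    push_cast
    ring
  rw [← heq]
  exact hmain

lemma iteratedDeriv_tsum_pow {c : ℕ → ℂ} (hc : PolyBdd c) (j : ℕ) :
    ∀ z : ℂ, ‖z‖ < 1 → iteratedDeriv j (fun w : ℂ => ∑' n : ℕ, c n * w ^ n) z
      = ∑' n : ℕ, (((n + j).descFactorial j : ℕ) : ℂ) * c (n + j) * z ^ n := by
  induction j generalizing c with
  | zero => intro z hz; simp [iteratedDeriv_zero]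
  | succ j ih =>
    intro z hz
    rw [iteratedDeriv_succ']
    set c' : ℕ → ℂ := fun n => ((n : ℂ) + 1) * c (n + 1) with hc'def
    have hpb' : PolyBdd c' := polyBdd_shift hc
    have hev : deriv (fun w : ℂ => ∑' n : ℕ, c n * w ^ n)
        =ᶠ[nhds z] (fun w => ∑' n : ℕ, c' n * w ^ n) := by
      have hop : IsOpen {w : ℂ | ‖w‖ < 1} := isOpen_lt continuous_norm continuous_const
      filter_upwards [hop.mem_nhds hz] with w hw
      rw [(hasDerivAt_tsum_pow hc hw).deriv]
      apply tsum_congr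
      intro n
      simp only [hc'def]
      ring
    rw [Filter.EventuallyEq.iteratedDeriv_eq j hev, ih hpb' z hz]
    apply tsum_congr
    intro n
    have hd : ((n + j + 1).descFactorial (j + 1) : ℕ)
        = (n + j + 1) * ((n + j).descFactorial j) := Nat.succ_descFactorial_succ (n + j) j
    show (((n + j).descFactorial j : ℕ) : ℂ) * c' (n + j) * z ^ n
        = (((n + j + 1).descFactorial (j + 1) : ℕ) : ℂ) * c (n + j + 1) * z ^ n
    rw [hd]
    simp only [hc'def]
    push_cast
    ring

lemma analyticOnNhd_tsum_pow {c : ℕ → ℂ} (hc : PolyBdd c) :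
    AnalyticOnNhd ℂ (fun w : ℂ => ∑' n : ℕ, c n * w ^ n) (ball (0 : ℂ) 1) := by
  obtain ⟨C, k, hC⟩ := hc
  have hC0 : 0 ≤ C := le_trans (norm_nonneg (c 0)) (by simpa using hC 0)
  intro z hz
  rw [mem_ball_zero_iff] at hz
  set p := FormalMultilinearSeries.ofScalars ℂ c with hp
  have hρ0 : (0:ℝ) ≤ (‖z‖ + 1) / 2 := by positivity
  set ρ : NNReal := ⟨(‖z‖ + 1) / 2, hρ0⟩ with hρdef
  have hρval : (ρ : ℝ) = (‖z‖ + 1) / 2 := rfl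
  have hn0 : (0:ℝ) ≤ ‖z‖ := norm_nonneg z
  have hρ1 : (ρ : ℝ) < 1 := by rw [hρval]; linarith
  have hρpos : (0:ℝ) < ρ := by rw [hρval]; linarith
  have hzρ : ‖z‖ < (ρ : ℝ) := by rw [hρval]; linarith
  have hgs : Summable (fun n : ℕ => C * (((n : ℝ) + 1) ^ k * (ρ : ℝ) ^ n)) :=
    (aux_summable k hρpos.le hρ1).mul_left C
  have hsum : Summable fun n : ℕ => ‖p n‖ * (ρ : ℝ) ^ n := by
    apply Summable.of_nonneg_of_le (fun n => by positivity) (fun n => ?_) hgs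
    have hpn : ‖p n‖ = ‖c n‖ := FormalMultilinearSeries.ofScalars_norm ℂ c n
    rw [hpn, ← mul_assoc]
    exact mul_le_mul_of_nonneg_right (hC n) (by positivity)
  have hrad : (ρ : ENNReal) ≤ p.radius := p.le_radius_of_summable hsum
  have hpos : 0 < p.radius := lt_of_lt_of_le (by exact_mod_cast hρpos) hrad
  have hball := p.hasFPowerSeriesOnBall hpos
  have hzmem : z ∈ Metric.eball (0 : ℂ) p.radius := by
    rw [Metric.mem_eball, edist_zero_right]
    refine lt_of_lt_of_le ?_ hrad
    exact_mod_cast hzρ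
  have hA : AnalyticAt ℂ p.sum z := hball.analyticAt_of_mem hzmem
  have hfun : (fun w : ℂ => ∑' n : ℕ, c n * w ^ n) = p.sum := by
    funext w
    rw [FormalMultilinearSeries.sum]
    apply tsum_congr
    intro n
    rw [hp, FormalMultilinearSeries.ofScalars_apply_eq, smul_eq_mul]
  rw [hfun]
  exact hA

lemma vanish (x : ℂ) : ∀ j m : ℕ, j < m → ∀ ψ : ℂ → ℂ, AnalyticAt ℂ ψ x →
    iteratedDeriv j (fun z => (z - x) ^ m * ψ z) x = 0 := by
  intro j
  induction j with
  | zero =>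
    intro m hm ψ _
    match m, hm with
    | m + 1, _ => simp [iteratedDeriv_zero]
  | succ j ih =>
    intro m hm ψ hψ
    obtain ⟨m, rfl⟩ : ∃ m', m = m' + 1 := ⟨m - 1, by omega⟩
    rw [iteratedDeriv_succ']
    have hdψ : AnalyticAt ℂ (deriv ψ) x := by
      obtain ⟨p, r, hpr⟩ := hψ
      exact hpr.analyticOnNhd.deriv x (EMetric.mem_ball_self hpr.r_pos)
    have hχ : AnalyticAt ℂ (fun z => ((m : ℂ) + 1) * ψ z + (z - x) * deriv ψ z) x := by
      exact ((analyticAt_const.mul hψ).add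
        (((analyticAt_id.sub analyticAt_const)).mul hdψ))
    have hev : deriv (fun z : ℂ => (z - x) ^ (m + 1) * ψ z) =ᶠ[nhds x]
        (fun z => (z - x) ^ m * (((m : ℂ) + 1) * ψ z + (z - x) * deriv ψ z)) := by
      filter_upwards [hψ.eventually_analyticAt] with w hw
      have h1 : HasDerivAt (fun z : ℂ => (z - x) ^ (m + 1))
          (((m : ℂ) + 1) * (w - x) ^ m) w := by
        have := (hasDerivAt_pow (m + 1) (w - x)).comp w ((hasDerivAt_id w).sub_const x)
        simpa [Function.comp_def] using this
      have h2 : HasDerivAt ψ (deriv ψ w) w := hw.differentiableAt.hasDerivAt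
      rw [(show HasDerivAt (fun z : ℂ => (z - x) ^ (m + 1) * ψ z) _ w from h1.mul h2).deriv]
      ring
    rw [Filter.EventuallyEq.iteratedDeriv_eq j hev]
    exact ih m (by omega) _ hχ

lemma polyBdd_of_H2 (u : H2) : PolyBdd (fun n => u n) := by
  refine ⟨‖u‖, 0, fun n => ?_⟩
  simpa using lp.norm_apply_le_norm (by norm_num : (2 : ENNReal) ≠ 0) u n

lemma gcoef_diag (w : ℂ) (k : ℕ) : gcoef w k k = (k.factorial : ℂ) := by
  simp [gcoef]

lemma gcoef_eq_zero_of_lt (w : ℂ) {j n : ℕ} (h : n < j) : gcoef w j n = 0 := by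
  simp [gcoef, Nat.not_le.mpr h]

/-- If `f` is analytic with a zero of multiplicity `m` at `z₀ ∈ 𝔻` and `A_f` is
densely defined, then `g_{z₀}^{[0]}, …, g_{z₀}^{[m−1]}` are linearly independent
eigenfunctions of `A_f*` with eigenvalue `0`; hence the zero eigenspace of `A_f*`
has dimension at least `m`. -/
theorem zero_eigenspace_dimension (f : ℂ → ℂ)
    (hf : AnalyticOnNhd ℂ f (ball (0 : ℂ) 1))
    (z₀ : ℂ) (hz₀ : z₀ ∈ ball (0 : ℂ) 1) (m : ℕ) (hm : 1 ≤ m)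
    (hzero : ∀ ℓ < m, iteratedDeriv ℓ f z₀ = 0)
    (hmult : iteratedDeriv m f z₀ ≠ 0)
    (hdense : Dense {g : H2 | ∃ u : H2, ∀ z ∈ ball (0 : ℂ) 1,
      hardyEval u z = f z * deriv (hardyEval g) z}) :
    LinearIndependent ℂ (fun j : Fin m => gcoef z₀ (j : ℕ)) ∧
    ∀ j : Fin m, ∀ g u : H2,
      (∀ z ∈ ball (0 : ℂ) 1, hardyEval u z = f z * deriv (hardyEval g) z) →
      ∑' n : ℕ, u n * conj (gcoef z₀ (j : ℕ) n) = 0 := by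
  constructor
  · -- linear independence
    rw [Fintype.linearIndependent_iff]
    intro gc hgc
    suffices H : ∀ k : ℕ, ∀ hk : k < m, gc ⟨k, hk⟩ = 0 by
      intro i; simpa using H i.1 i.2
    intro k
    induction k using Nat.strong_induction_on with
    | _ k ih =>
      intro hk
      have hev := congrFun hgc k
      rw [Finset.sum_apply] at hev
      have hsingle : ∀ i : Fin m, i ≠ ⟨k, hk⟩ →
          (gc i • gcoef z₀ (i : ℕ)) k = 0 := by
        intro i hi
        have hik : (i : ℕ) ≠ k := fun h => hi (Fin.ext h)
        rcases lt_or_gt_of_ne hik with hlt | hgt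
        · have : gc i = 0 := by
            have := ih i.1 hlt i.2
            simpa using this
          simp [this]
        · simp [Pi.smul_apply, gcoef_eq_zero_of_lt z₀ hgt]
      rw [Finset.sum_eq_single ⟨k, hk⟩ (fun i _ hi => hsingle i hi)
        (fun h => absurd (Finset.mem_univ _) h)] at hev
      have : gc ⟨k, hk⟩ * (k.factorial : ℂ) = 0 := by
        simpa [Pi.smul_apply, smul_eq_mul, gcoef_diag] using hev
      rcases mul_eq_zero.mp this with h | h
      · exact h
      · exact absurd h (by exact_mod_cast Nat.factorial_ne_zero k)
  · -- eigenfunction property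
    intro j g u hgu
    have hz₀n : ‖z₀‖ < 1 := mem_ball_zero_iff.mp hz₀
    have hPBu : PolyBdd (fun n => u n) := polyBdd_of_H2 u
    have hPBg : PolyBdd (fun n => g n) := polyBdd_of_H2 g
    have hjm : (j : ℕ) < m := j.2
    -- Step 1: reindex the tsum
    have hreindex : ∑' n : ℕ, u n * conj (gcoef z₀ (j : ℕ) n)
        = ∑' n : ℕ, (((n + (j : ℕ)).descFactorial (j : ℕ) : ℕ) : ℂ) * u (n + (j : ℕ)) * z₀ ^ n := by
      rw [← Function.Injective.tsum_eq (g := fun n : ℕ => n + (j : ℕ))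
        (add_left_injective (j : ℕ)) ?_]
      · apply tsum_congr
        intro n
        have hle : (j : ℕ) ≤ n + (j : ℕ) := Nat.le_add_left _ _
        simp only [gcoef, if_pos hle, Nat.add_sub_cancel]
        have hdesc : ((n + (j : ℕ)).factorial / n.factorial : ℕ)
            = (n + (j : ℕ)).descFactorial (j : ℕ) := by
          rw [Nat.descFactorial_eq_div hle, Nat.add_sub_cancel]
        rw [hdesc, map_mul, map_pow, Complex.conj_conj, map_natCast]
        ring
      · intro x hx
        rw [Function.mem_support] at hx
        by_contra hnot
        have hxj : x < (j : ℕ) := by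
          by_contra hge
          refine hnot ⟨x - (j : ℕ), ?_⟩
          show x - (j : ℕ) + (j : ℕ) = x
          omega
        exact hx (by simp [gcoef_eq_zero_of_lt z₀ hxj])
    rw [hreindex]
    -- Step 2: identify with iterated derivative
    have hH : (∑' n : ℕ, (((n + (j : ℕ)).descFactorial (j : ℕ) : ℕ) : ℂ) * u (n + (j : ℕ)) * z₀ ^ n)
        = iteratedDeriv (j : ℕ) (hardyEval u) z₀ := by
      rw [show hardyEval u = fun w : ℂ => ∑' n : ℕ, u n * w ^ n from rfl]
      exact (iteratedDeriv_tsum_pow hPBu (j : ℕ) z₀ hz₀n).symm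
    rw [hH]
    -- Step 3: H agrees with f * G' near z₀
    have hev1 : hardyEval u =ᶠ[nhds z₀] (fun z => f z * deriv (hardyEval g) z) := by
      filter_upwards [isOpen_ball.mem_nhds hz₀] with w hw
      exact hgu w hw
    -- Step 4: factorization of f
    obtain ⟨q, hq⟩ := hf z₀ hz₀
    obtain ⟨r, hqr⟩ := id hq
    have hcoeff : ∀ n : ℕ, (n.factorial : ℂ) * q.coeff n = iteratedDeriv n f z₀ := by
      intro n
      have h1 := hqr.factorial_smul (1 : ℂ) n
      rw [iteratedDeriv_eq_iteratedFDeriv]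
      rw [← h1, nsmul_eq_mul]
      rfl
    have hqm : q m ≠ 0 := by
      intro h
      apply hmult
      rw [← hcoeff m, FormalMultilinearSeries.coeff_eq_zero.mpr h, mul_zero]
    have hqlt : ∀ k < m, q k = 0 := by
      intro k hk
      rw [← FormalMultilinearSeries.coeff_eq_zero]
      have h1 := hcoeff k
      rw [hzero k hk] at h1
      have h2 : (k.factorial : ℂ) ≠ 0 := by exact_mod_cast Nat.factorial_ne_zero k
      exact (mul_eq_zero.mp h1).resolve_left h2
    have hqne : q ≠ 0 := fun h => hqm (by simp [h])
    have horder : m ≤ q.order := by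
      by_contra hlt
      exact (FormalMultilinearSeries.apply_order_ne_zero hqne)
        (hqlt q.order (Nat.lt_of_not_le hlt))
    have hfac := hq.eq_pow_order_mul_iterate_dslope
    have hg₀ : AnalyticAt ℂ ((Function.swap dslope z₀)^[q.order] f) z₀ :=
      ⟨_, hq.has_fpower_series_iterate_dslope_fslope q.order⟩
    -- Step 5: G' analytic at z₀
    have hGanal : AnalyticOnNhd ℂ (hardyEval g) (ball (0 : ℂ) 1) := by
      rw [show hardyEval g = fun w : ℂ => ∑' n : ℕ, g n * w ^ n from rfl]
      exact analyticOnNhd_tsum_pow hPBg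
    have hGd : AnalyticAt ℂ (deriv (hardyEval g)) z₀ := hGanal.deriv z₀ hz₀
    -- Step 6: combine
    set ψ : ℂ → ℂ := fun z =>
      (z - z₀) ^ (q.order - m) * ((Function.swap dslope z₀)^[q.order] f z) * deriv (hardyEval g) z
      with hψdef
    have hψ : AnalyticAt ℂ ψ z₀ :=
      (((analyticAt_id.sub analyticAt_const).pow _).mul hg₀).mul hGd
    have hev2 : hardyEval u =ᶠ[nhds z₀] (fun z => (z - z₀) ^ m * ψ z) := by
      filter_upwards [hev1, Filter.Eventually.of_forall hfac] with w hw1 hw2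
      rw [hw1, hw2, hψdef]
      have : (w - z₀) ^ q.order = (w - z₀) ^ m * (w - z₀) ^ (q.order - m) := by
        rw [← pow_add]
        congr 1
        omega
      rw [smul_eq_mul, this]
      ring
    rw [Filter.EventuallyEq.iteratedDeriv_eq (j : ℕ) hev2]
    exact vanish z₀ (j : ℕ) m hjm ψ hψ
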